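/- If Z > 0 is a C² solution of -Z'' + VZ - 1/(4Z³) = 0 on (a,b), then for any fixed y ∈ (a,b), the function G₀(x,y) := Z(x)Z(y)·exp(-∫_{min(x,y)}^{max(x,y)} dt/(2Z(t)²)) satisfies -∂²G₀/∂x² + V(x)G₀(x,y) = 0 for all x ≠ y in (a,b), and its x-derivative has a jump of -1 across x = y (i.e., ∂_x G₀(y⁺,y) - ∂_x G₀(y⁻,y) = -1). -/

import Mathlib

open Set intervalIntegral

/-- Auxiliary lemma: derivative facts for `u ↦ Z u * Z y * exp (s * ∫ t in y..u, 1/(2 Z t ^2))`. -/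
lemma bohl_aux (V Z : ℝ → ℝ) (a b : ℝ)
    (hZpos : ∀ x ∈ Set.Ioo a b, 0 < Z x)
    (hZC2 : ContDiffOn ℝ 2 Z (Set.Ioo a b))
    (hZode : ∀ x ∈ Set.Ioo a b,
      -(deriv (deriv Z) x) + V x * Z x - 1 / (4 * (Z x) ^ 3) = 0)
    (y : ℝ) (hy : y ∈ Set.Ioo a b)
    (s : ℝ) (hs : s = 1 ∨ s = -1) :
    (∀ x ∈ Set.Ioo a b,
      HasDerivAt (fun u => Z u * Z y * Real.exp (s * ∫ t in y..u, 1 / (2 * (Z t) ^ 2)))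
        (Z y * (deriv Z x + s * Z x * (1 / (2 * (Z x) ^ 2))) *
          Real.exp (s * ∫ t in y..x, 1 / (2 * (Z t) ^ 2))) x) ∧
    (∀ x ∈ Set.Ioo a b,
      HasDerivAt (fun u => Z y * (deriv Z u + s * Z u * (1 / (2 * (Z u) ^ 2))) *
          Real.exp (s * ∫ t in y..u, 1 / (2 * (Z t) ^ 2)))
        (V x * (Z x * Z y * Real.exp (s * ∫ t in y..x, 1 / (2 * (Z t) ^ 2)))) x) := by
  have hopen : IsOpen (Set.Ioo a b) := isOpen_Ioo
  have hZcont : ContinuousOn Z (Set.Ioo a b) := hZC2.continuousOn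
  set c : ℝ → ℝ := fun u => 1 / (2 * (Z u) ^ 2) with hcdef
  have hccont : ContinuousOn c (Set.Ioo a b) := by
    apply ContinuousOn.div continuousOn_const
    · exact (continuousOn_const.mul (hZcont.pow 2))
    · intro x hx
      have := hZpos x hx
      positivity
  -- derivative of F
  have hFd : ∀ x ∈ Set.Ioo a b,
      HasDerivAt (fun u => ∫ t in y..u, c t) (c x) x := by
    intro x hx
    apply intervalIntegral.integral_hasDerivAt_right
    · apply (hccont.mono _).intervalIntegrable
      exact Set.ordConnected_Ioo.uIcc_subset hy hx
    · exact hccont.stronglyMeasurableAtFilter hopen x hx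
    · exact hccont.continuousAt (hopen.mem_nhds hx)
  have hZd : ∀ x ∈ Set.Ioo a b, HasDerivAt Z (deriv Z x) x := by
    intro x hx
    exact ((hZC2.differentiableOn (by norm_num) x hx).differentiableAt
      (hopen.mem_nhds hx)).hasDerivAt
  have hZ'C1 : ContDiffOn ℝ 1 (deriv Z) (Set.Ioo a b) := by
    have := hZC2.deriv_of_isOpen hopen (m := 1) (by norm_num)
    exact this
  have hZ'd : ∀ x ∈ Set.Ioo a b, HasDerivAt (deriv Z) (deriv (deriv Z) x) x := by
    intro x hx
    exact ((hZ'C1.differentiableOn (by norm_num) x hx).differentiableAt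
      (hopen.mem_nhds hx)).hasDerivAt
  -- derivative of c
  have hcd : ∀ x ∈ Set.Ioo a b,
      HasDerivAt c (-(deriv Z x) / (Z x) ^ 3) x := by
    intro x hx
    have hZx := hZpos x hx
    have h1 : HasDerivAt (fun u => 2 * (Z u) ^ 2) (2 * (2 * Z x ^ 1 * deriv Z x)) x :=
      ((hZd x hx).pow 2).const_mul 2
    have h2 := h1.inv (by positivity)
    have : c = fun u => (2 * (Z u) ^ 2)⁻¹ := by
      funext u; simp [hcdef, one_div]
    rw [this]
    refine h2.congr_deriv ?_
    field_simp
  constructor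
  · intro x hx
    have hE : HasDerivAt (fun u => Real.exp (s * ∫ t in y..u, c t))
        (Real.exp (s * ∫ t in y..x, c t) * (s * c x)) x := by
      exact (((hFd x hx).const_mul s).exp)
    have := (((hZd x hx).mul_const (Z y)).mul hE)
    refine this.congr_deriv ?_
    ring
  · intro x hx
    have hZx := hZpos x hx
    have hE : HasDerivAt (fun u => Real.exp (s * ∫ t in y..u, c t))
        (Real.exp (s * ∫ t in y..x, c t) * (s * c x)) x :=
      (((hFd x hx).const_mul s).exp)
    have hmid : HasDerivAt (fun u => Z y * (deriv Z u + s * Z u * c u))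
        (Z y * (deriv (deriv Z) x + s * (deriv Z x * c x + Z x * (-(deriv Z x) / (Z x) ^ 3)))) x := by
      have := ((hZ'd x hx).add ((((hZd x hx).mul (hcd x hx))).const_mul s)).const_mul (Z y)
      refine (this.congr_deriv ?_).congr_of_eventuallyEq (Filter.Eventually.of_forall fun u => ?_)
      · ring
      · simp only [Pi.add_apply, Pi.mul_apply]; ring
    have H := hmid.mul hE
    refine H.congr_deriv ?_
    have hode := hZode x hx
    have hZ'' : deriv (deriv Z) x = V x * Z x - 1 / (4 * (Z x) ^ 3) := by linarith
    rw [hZ'']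
    have hZne : Z x ≠ 0 := ne_of_gt hZx
    rcases hs with rfl | rfl <;> · simp only [hcdef]; field_simp; ring

theorem bohl_green_function
    (V Z : ℝ → ℝ) (a b : ℝ)
    (hV : ContinuousOn V (Set.Ioo a b))
    (hZpos : ∀ x ∈ Set.Ioo a b, 0 < Z x)
    (hZC2 : ContDiffOn ℝ 2 Z (Set.Ioo a b))
    (hZode : ∀ x ∈ Set.Ioo a b,
      -(deriv (deriv Z) x) + V x * Z x - 1 / (4 * (Z x) ^ 3) = 0)
    (y : ℝ) (hy : y ∈ Set.Ioo a b)
    (G : ℝ → ℝ)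
    (hG : ∀ x, G x = Z x * Z y *
      Real.exp (-∫ t in (min x y)..(max x y), 1 / (2 * (Z t) ^ 2))) :
    (∀ x ∈ Set.Ioo a b, x ≠ y → -(deriv (deriv G) x) + V x * G x = 0) ∧
    derivWithin G (Set.Ici y) y - derivWithin G (Set.Iic y) y = -1 := by
  have hopen : IsOpen (Set.Ioo a b) := isOpen_Ioo
  set c : ℝ → ℝ := fun u => 1 / (2 * (Z u) ^ 2) with hcdef
  set H : ℝ → ℝ → ℝ := fun s u => Z u * Z y * Real.exp (s * ∫ t in y..u, c t) with hHdef
  set D : ℝ → ℝ → ℝ := fun s u =>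
    Z y * (deriv Z u + s * Z u * c u) * Real.exp (s * ∫ t in y..u, c t) with hDdef
  have aux : ∀ s : ℝ, s = 1 ∨ s = -1 →
      (∀ x ∈ Set.Ioo a b, HasDerivAt (H s) (D s x) x) ∧
      (∀ x ∈ Set.Ioo a b, HasDerivAt (D s) (V x * H s x) x) := fun s hs =>
    bohl_aux V Z a b hZpos hZC2 hZode y hy s hs
  have hGplus : ∀ x, y ≤ x → G x = H (-1) x := by
    intro x h
    rw [hG, hHdef]
    simp only [min_eq_right h, max_eq_left h, neg_one_mul, hcdef]
  have hGminus : ∀ x, x ≤ y → G x = H 1 x := by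
    intro x h
    rw [hG, hHdef]
    simp only [min_eq_left h, max_eq_right h, one_mul, hcdef,
      intervalIntegral.integral_symm y x, neg_neg]
  constructor
  · intro x hx hne
    rcases lt_or_gt_of_ne hne with hxy | hxy
    · -- x < y : use H 1
      have hev : G =ᶠ[nhds x] H 1 :=
        Filter.eventuallyEq_of_mem (isOpen_Iio.mem_nhds hxy) fun z hz => hGminus z (le_of_lt hz)
      have h2 : deriv (deriv G) x = deriv (deriv (H 1)) x := hev.deriv.deriv_eq
      have hev2 : deriv (H 1) =ᶠ[nhds x] D 1 :=
        Filter.eventuallyEq_of_mem (hopen.mem_nhds hx)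
          fun z hz => ((aux 1 (Or.inl rfl)).1 z hz).deriv
      have h3 : deriv (deriv (H 1)) x = V x * H 1 x := by
        rw [hev2.deriv_eq]
        exact ((aux 1 (Or.inl rfl)).2 x hx).deriv
      rw [h2, h3, hGminus x (le_of_lt hxy)]
      ring
    · -- x > y : use H (-1)
      have hev : G =ᶠ[nhds x] H (-1) :=
        Filter.eventuallyEq_of_mem (isOpen_Ioi.mem_nhds hxy) fun z hz => hGplus z (le_of_lt hz)
      have h2 : deriv (deriv G) x = deriv (deriv (H (-1))) x := hev.deriv.deriv_eq
      have hev2 : deriv (H (-1)) =ᶠ[nhds x] D (-1) :=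
        Filter.eventuallyEq_of_mem (hopen.mem_nhds hx)
          fun z hz => ((aux (-1) (Or.inr rfl)).1 z hz).deriv
      have h3 : deriv (deriv (H (-1))) x = V x * H (-1) x := by
        rw [hev2.deriv_eq]
        exact ((aux (-1) (Or.inr rfl)).2 x hx).deriv
      rw [h2, h3, hGplus x (le_of_lt hxy)]
      ring
  · have h1 : derivWithin G (Set.Ici y) y = D (-1) y := by
      have e := derivWithin_congr (f₁ := G) (f := H (-1)) (s := Set.Ici y) (x := y)
        (fun z hz => hGplus z hz) (hGplus y le_rfl)
      rw [e]
      exact (((aux (-1) (Or.inr rfl)).1 y hy).hasDerivWithinAt).derivWithin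
        (uniqueDiffOn_Ici y y Set.self_mem_Ici)
    have h2 : derivWithin G (Set.Iic y) y = D 1 y := by
      have e := derivWithin_congr (f₁ := G) (f := H 1) (s := Set.Iic y) (x := y)
        (fun z hz => hGminus z hz) (hGminus y le_rfl)
      rw [e]
      exact (((aux 1 (Or.inl rfl)).1 y hy).hasDerivWithinAt).derivWithin
        (uniqueDiffOn_Iic y y Set.self_mem_Iic)
    rw [h1, h2, hDdef]
    have hZy : Z y ≠ 0 := ne_of_gt (hZpos y hy)
    simp only [intervalIntegral.integral_same, mul_zero, Real.exp_zero, mul_one, hcdef]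
    field_simp
    ring
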